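/- Let L = ℤ[A, A⁻¹] be the ring of Laurent polynomials over ℤ, and let R be the localization of L away from the element A⁴ + 1 (so that d = -A² - A⁻² = -A⁻²(A⁴ + 1) is invertible in R). Let P = -A⁻³⁴ - 6A⁻³⁰ - 15A⁻²⁶ - 35A⁻²² - 65A⁻¹⁸ - 66A⁻¹⁴ - 36A⁻¹⁰ - 15A⁻⁶ - 5A⁻² + 10A⁶ + 35A¹⁰ + 61A¹⁴ + 66A¹⁸ + 40A²² + 15A²⁶ + 10A³⁰ + 6A³⁴ + A³⁸ and let P* = -A³⁴ - 6A³⁰ - 15A²⁶ - 35A²² - 65A¹⁸ - 66A¹⁴ - 36A¹⁰ - 15A⁶ - 5A² + 10A⁻⁶ + 35A⁻¹⁰ + 61A⁻¹⁴ + 66A⁻¹⁸ + 40A⁻²² + 15A⁻²⁶ + 10A⁻³⁰ + 6A⁻³⁴ + A⁻³⁸ (the polynomial obtained from P by the substitution A ↦ A⁻¹). Then the image of P - P* in R does not belong to the ideal of R generated by 5 and A⁴⁰ - 1. -/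

import Mathlib

open LaurentPolynomial

namespace Stmt9Aux
noncomputable section

abbrev Sd : Type := DualNumber (ZMod 5)

def ee : Sd := DualNumber.eps

lemma ee_def : ee = DualNumber.eps := rfl

lemma ee2 : ee * ee = 0 := DualNumber.eps_mul_eps

lemma five0 : (5 : Sd) = 0 := by
  have h : (TrivSqZeroExt.inl ((5 : ℕ) : ZMod 5) : Sd) = ((5 : ℕ) : Sd) :=
    TrivSqZeroExt.inl_natCast 5
  rw [show ((5 : ℕ) : ZMod 5) = 0 by decide, TrivSqZeroExt.inl_zero] at h
  have h2 : ((5 : ℕ) : Sd) = (5 : Sd) := by norm_cast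
  rw [h2] at h
  exact h.symm

lemma pow_one_add_ee (m : ℕ) : (1 + ee) ^ m = 1 + (m : Sd) * ee := by
  induction m with
  | zero => simp
  | succ n ih =>
    rw [pow_succ, ih]
    have h : (1 + (n : Sd) * ee) * (1 + ee)
        = 1 + ((n : Sd) + 1) * ee + (n : Sd) * (ee * ee) := by ring
    rw [h, ee2, mul_zero, add_zero]
    push_cast
    ring

lemma u5 : (1 + ee) ^ (5 : ℕ) = 1 := by
  rw [pow_one_add_ee]
  push_cast
  rw [five0]
  ring

def uu : Sdˣ where
  val := 1 + ee
  inv := (1 + ee) ^ (4 : ℕ)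
  val_inv := by rw [← pow_succ']; exact u5
  inv_val := by rw [← pow_succ]; exact u5

def φ : LaurentPolynomial ℤ →ₐ[ℤ] Sd :=
  AddMonoidAlgebra.lift ℤ Sd ℤ ((Units.coeHom Sd).comp (zpowersHom Sdˣ uu))

lemma φ_T (n : ℤ) : φ (T n) = ((uu ^ n : Sdˣ) : Sd) := by
  show AddMonoidAlgebra.lift ℤ Sd ℤ _ (AddMonoidAlgebra.single n 1) = _
  rw [AddMonoidAlgebra.lift_single, one_smul]
  rfl

lemma φ_T_nat (n : ℕ) : φ (T (n : ℤ)) = 1 + (n : Sd) * ee := by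
  rw [φ_T, zpow_natCast, Units.val_pow_eq_pow_val]
  exact pow_one_add_ee n

lemma hunit : IsUnit (φ (T 4 + 1)) := by
  have h4 : φ (T 4 + 1) = 2 + 4 * ee := by
    rw [map_add, map_one, show (4 : ℤ) = ((4 : ℕ) : ℤ) by norm_num, φ_T_nat]
    push_cast
    ring
  rw [h4]
  apply IsUnit.of_mul_eq_one (3 + 4 * ee)
  have h : ((2 : Sd) + 4 * ee) * (3 + 4 * ee) = 6 + 20 * ee + 16 * (ee * ee) := by ring
  rw [h, ee2]
  linear_combination (1 + 4 * ee) * five0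

end
end Stmt9Aux

set_option maxHeartbeats 1000000 in
set_option synthInstance.maxHeartbeats 400000 in
/-- The Yamada polynomial `P` of the given embedding of the Petersen graph is not congruent
to `P* = P(A⁻¹)` modulo `5` and `A⁴⁰ - 1` in `R`, the localization of `ℤ[A, A⁻¹]` away from
`A⁴ + 1` (so that `d = -A² - A⁻²` is invertible). Here `T n` denotes `Aⁿ`. -/
theorem stmt9
    (P Pstar : LaurentPolynomial ℤ)
    (hP : P = -T (-34) - 6 * T (-30) - 15 * T (-26) - 35 * T (-22) - 65 * T (-18)
      - 66 * T (-14) - 36 * T (-10) - 15 * T (-6) - 5 * T (-2)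
      + 10 * T 6 + 35 * T 10 + 61 * T 14 + 66 * T 18 + 40 * T 22
      + 15 * T 26 + 10 * T 30 + 6 * T 34 + T 38)
    (hPstar : Pstar = -T 34 - 6 * T 30 - 15 * T 26 - 35 * T 22 - 65 * T 18
      - 66 * T 14 - 36 * T 10 - 15 * T 6 - 5 * T 2
      + 10 * T (-6) + 35 * T (-10) + 61 * T (-14) + 66 * T (-18) + 40 * T (-22)
      + 15 * T (-26) + 10 * T (-30) + 6 * T (-34) + T (-38)) :
    algebraMap (LaurentPolynomial ℤ)
        (Localization.Away ((T 4 + 1 : LaurentPolynomial ℤ))) (P - Pstar) ∉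
      Ideal.span ({(5 : Localization.Away ((T 4 + 1 : LaurentPolynomial ℤ))),
        algebraMap (LaurentPolynomial ℤ)
          (Localization.Away ((T 4 + 1 : LaurentPolynomial ℤ))) (T 40 - 1)} :
            Set (Localization.Away ((T 4 + 1 : LaurentPolynomial ℤ)))) := by
  intro hmem
  set Rl := Localization.Away ((T 4 + 1 : LaurentPolynomial ℤ))
  set ψ : Rl →+* Stmt9Aux.Sd :=
    IsLocalization.Away.lift (T 4 + 1) (g := Stmt9Aux.φ.toRingHom) Stmt9Aux.hunit with hψ
  have hψalg : ∀ a : LaurentPolynomial ℤ,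
      ψ (algebraMap (LaurentPolynomial ℤ) Rl a) = Stmt9Aux.φ a := fun a =>
    IsLocalization.Away.lift_eq _ _ _
  rw [Ideal.mem_span_pair] at hmem
  obtain ⟨a, b, hab⟩ := hmem
  have hz : Stmt9Aux.φ (P - Pstar) = 0 := by
    have h1 := congrArg ψ hab
    rw [map_add, map_mul, map_mul, hψalg, hψalg] at h1
    have hψ5 : ψ (5 : Rl) = 5 := by
      have h5 : ((5 : ℕ) : Rl) = (5 : Rl) := by norm_cast
      rw [← h5, map_natCast]
      norm_cast
    have h40 : Stmt9Aux.φ (T 40 - 1) = 0 := by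
      rw [map_sub, map_one, show (40 : ℤ) = ((40 : ℕ) : ℤ) by norm_num, Stmt9Aux.φ_T_nat]
      have h40' : ((40 : ℕ) : Stmt9Aux.Sd) = 0 := by
        push_cast
        linear_combination (8 : Stmt9Aux.Sd) * Stmt9Aux.five0
      rw [h40', zero_mul, add_zero, sub_self]
    simp only [hψ5, h40, Stmt9Aux.five0, mul_zero, add_zero, zero_add] at h1
    exact h1.symm
  -- multiply by T 38 to clear negative exponents
  have hQ : (P - Pstar) * T 38 =
      T ((76 : ℕ) : ℤ) + 7 * T ((72 : ℕ) : ℤ) + 16 * T ((68 : ℕ) : ℤ) + 30 * T ((64 : ℕ) : ℤ)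
      + 75 * T ((60 : ℕ) : ℤ) + 131 * T ((56 : ℕ) : ℤ) + 127 * T ((52 : ℕ) : ℤ)
      + 71 * T ((48 : ℕ) : ℤ) + 25 * T ((44 : ℕ) : ℤ) + 5 * T ((40 : ℕ) : ℤ)
      - 5 * T ((36 : ℕ) : ℤ) - 25 * T ((32 : ℕ) : ℤ) - 71 * T ((28 : ℕ) : ℤ)
      - 127 * T ((24 : ℕ) : ℤ) - 131 * T ((20 : ℕ) : ℤ) - 75 * T ((16 : ℕ) : ℤ)
      - 30 * T ((12 : ℕ) : ℤ) - 16 * T ((8 : ℕ) : ℤ) - 7 * T ((4 : ℕ) : ℤ) - 1 := by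
    push_cast
    subst hP hPstar
    simp only [sub_mul, add_mul, neg_mul, one_mul, mul_assoc, ← T_add]
    norm_num
    ring
  have hzero : Stmt9Aux.φ ((P - Pstar) * T 38) = 0 := by
    rw [map_mul, hz, zero_mul]
  rw [hQ] at hzero
  simp only [map_add, map_sub, map_mul, map_one, map_ofNat, Stmt9Aux.φ_T_nat] at hzero
  have h4e : (4 : Stmt9Aux.Sd) * Stmt9Aux.ee = 0 := by
    linear_combination hzero - (3276 * Stmt9Aux.ee) * Stmt9Aux.five0
  have hee : Stmt9Aux.ee = 0 := by
    have h16 : (4 : Stmt9Aux.Sd) * 4 = 1 := by linear_combination 3 * Stmt9Aux.five0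
    calc Stmt9Aux.ee = (4 * 4) * Stmt9Aux.ee := by rw [h16, one_mul]
    _ = 4 * (4 * Stmt9Aux.ee) := by ring
    _ = 0 := by rw [h4e, mul_zero]
  have hsnd := congrArg TrivSqZeroExt.snd hee
  rw [Stmt9Aux.ee_def, DualNumber.snd_eps, TrivSqZeroExt.snd_zero] at hsnd
  exact absurd hsnd (by decide)
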